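/- arXiv:2310.05539 — 2 statements merged into one kernel-verified Lean document; each statement's English description precedes it below -/
import Mathlib

section
/- Let n, p, q be positive integers, A ∈ ℝ^{n×q} with AᵀA invertible, β_A ∈ ℝ^{p×q}, E ∈ ℝ^{n×p}, M = A β_Aᵀ + E, X = (A, M) ∈ ℝ^{n×(q+p)}, θ = (θ_Aᵀ, θ_Mᵀ)ᵀ ∈ ℝ^{q+p}, Z ∈ ℝ^n, and Y = Xθ + Z. For any θ̂ = (θ̂_Aᵀ, θ̂_Mᵀ)ᵀ ∈ ℝ^{q+p} and any matrix Û ∈ ℝ^{(q+p)×q}, define γ = β_Aᵀθ_M, β̂_A = ((AᵀA)⁻¹AᵀM)ᵀ, γ̂ = β̂_Aᵀθ̂_M + n⁻¹ÛᵀXᵀ(Y − Xθ̂), Σ̂_A = n⁻¹AᵀA, Σ̂_X = n⁻¹XᵀX, E_M = Eθ_M, g_j = (0_qᵀ, g̃_jᵀ)ᵀ where g̃_j is the j-th column of (Σ̂_A⁻¹ n⁻¹AᵀM)ᵀ, and G = (g₁,…,g_q). Then γ̂ − γ = W + B exactly, where W = n⁻¹Σ̂_A⁻¹AᵀE_M +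 n⁻¹ÛᵀXᵀZ and B = (Σ̂_X Û − G)ᵀ(θ − θ̂). -/
open Matrix

/-- In the LSEM `M = Aβ_Aᵀ + E`, `Y = Xθ + Z` with `X = (A, M)`, the debiased estimator
`γ̂ = β̂_Aᵀθ̂_M + n⁻¹ÛᵀXᵀ(Y − Xθ̂)` of the mediation effect `γ = β_Aᵀθ_M` satisfies the exact
decomposition `γ̂ − γ = W + B`, where `W = n⁻¹Σ̂_A⁻¹AᵀE_M + n⁻¹ÛᵀXᵀZ` and
`B = (Σ̂_X Û − G)ᵀ(θ − θ̂)`, with `G = (g₁,…,g_q)`, `g_j = (0_qᵀ, g̃_jᵀ)ᵀ`, and `g̃_j` the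
`j`-th column of `(Σ̂_A⁻¹ Σ̂_{AM})ᵀ`. -/
theorem statement_2
    (n p q : ℕ) (hn : 0 < n)
    (A : Matrix (Fin n) (Fin q) ℝ) (hA : IsUnit (Aᵀ * A))
    (βA : Matrix (Fin p) (Fin q) ℝ) (E : Matrix (Fin n) (Fin p) ℝ)
    (M : Matrix (Fin n) (Fin p) ℝ) (hM : M = A * βAᵀ + E)
    (X : Matrix (Fin n) (Fin q ⊕ Fin p) ℝ) (hX : X = Matrix.fromCols A M)
    (θA : Fin q → ℝ) (θM : Fin p → ℝ)
    (θ : Fin q ⊕ Fin p → ℝ) (hθ : θ = Sum.elim θA θM)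
    (Z Y : Fin n → ℝ) (hY : Y = X *ᵥ θ + Z)
    (θhat : Fin q ⊕ Fin p → ℝ)
    (Uhat : Matrix (Fin q ⊕ Fin p) (Fin q) ℝ)
    (γ : Fin q → ℝ) (hγ : γ = βAᵀ *ᵥ θM)
    (βhatA : Matrix (Fin p) (Fin q) ℝ) (hβhatA : βhatA = ((Aᵀ * A)⁻¹ * (Aᵀ * M))ᵀ)
    (γhat : Fin q → ℝ)
    (hγhat : γhat = βhatAᵀ *ᵥ (fun j => θhat (Sum.inr j))
        + (n : ℝ)⁻¹ • (Uhatᵀ *ᵥ (Xᵀ *ᵥ (Y - X *ᵥ θhat))))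
    (SighatA : Matrix (Fin q) (Fin q) ℝ) (hSighatA : SighatA = (n : ℝ)⁻¹ • (Aᵀ * A))
    (SighatAM : Matrix (Fin q) (Fin p) ℝ) (hSighatAM : SighatAM = (n : ℝ)⁻¹ • (Aᵀ * M))
    (SighatX : Matrix (Fin q ⊕ Fin p) (Fin q ⊕ Fin p) ℝ)
    (hSighatX : SighatX = (n : ℝ)⁻¹ • (Xᵀ * X))
    (EM : Fin n → ℝ) (hEM : EM = E *ᵥ θM)
    (G : Matrix (Fin q ⊕ Fin p) (Fin q) ℝ)
    (hG : G = Matrix.fromRows (0 : Matrix (Fin q) (Fin q) ℝ) ((SighatA⁻¹ * SighatAM)ᵀ))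
    (W : Fin q → ℝ)
    (hW : W = (n : ℝ)⁻¹ • (SighatA⁻¹ *ᵥ (Aᵀ *ᵥ EM)) + (n : ℝ)⁻¹ • (Uhatᵀ *ᵥ (Xᵀ *ᵥ Z)))
    (B : Fin q → ℝ) (hB : B = (SighatX * Uhat - G)ᵀ *ᵥ (θ - θhat)) :
    γhat - γ = W + B := by
  have hn0 : (n : ℝ) ≠ 0 := Nat.cast_ne_zero.mpr hn.ne'
  have hdet : IsUnit (Aᵀ * A).det := (Matrix.isUnit_iff_isUnit_det _).mp hA
  have hSS : (Aᵀ * A)⁻¹ * (Aᵀ * A) = 1 := Matrix.nonsing_inv_mul _ hdet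
  -- inverse of SighatA
  have hSinv : SighatA⁻¹ = (n : ℝ) • (Aᵀ * A)⁻¹ := by
    rw [hSighatA]
    refine Matrix.inv_eq_left_inv ?_
    rw [Matrix.smul_mul, Matrix.mul_smul, smul_smul, mul_inv_cancel₀ hn0, one_smul, hSS]
  -- the key matrix identity for β̂ᵀ
  set K : Matrix (Fin q) (Fin p) ℝ := (Aᵀ * A)⁻¹ * (Aᵀ * E) with hK
  have hkey : (Aᵀ * A)⁻¹ * (Aᵀ * M) = βAᵀ + K := by
    rw [hM, Matrix.mul_add, Matrix.mul_add, ← Matrix.mul_assoc (Aᵀ) A (βAᵀ),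
      ← Matrix.mul_assoc, hSS, Matrix.one_mul, hK]
  have hβt : βhatAᵀ = βAᵀ + K := by rw [hβhatA, Matrix.transpose_transpose, hkey]
  -- notation for sub-vectors
  set θhatM : Fin p → ℝ := fun j => θhat (Sum.inr j) with hθhatM
  set d : Fin q ⊕ Fin p → ℝ := θ - θhat with hd
  set dM : Fin p → ℝ := θM - θhatM with hdM
  -- residual decomposition
  have hres : Y - X *ᵥ θhat = X *ᵥ d + Z := by
    rw [hY, hd, Matrix.mulVec_sub]; abel
  have hres2 : Xᵀ *ᵥ (Y - X *ᵥ θhat) = (Xᵀ * X) *ᵥ d + Xᵀ *ᵥ Z := by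
    rw [hres, Matrix.mulVec_add, Matrix.mulVec_mulVec]
  -- W's first term
  have hW1 : (n : ℝ)⁻¹ • (SighatA⁻¹ *ᵥ (Aᵀ *ᵥ EM)) = K *ᵥ θM := by
    rw [hSinv, hEM, Matrix.smul_mulVec, smul_smul, inv_mul_cancel₀ hn0,
      one_smul, Matrix.mulVec_mulVec, Matrix.mulVec_mulVec, hK, Matrix.mul_assoc]
  -- decompose B
  have hGM : SighatA⁻¹ * SighatAM = βAᵀ + K := by
    rw [hSinv, hSighatAM, Matrix.smul_mul, Matrix.mul_smul, smul_smul,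
      mul_inv_cancel₀ hn0, one_smul, hkey]
  have hdsum : d = Sum.elim (fun i => θA i - θhat (Sum.inl i)) dM := by
    funext x
    cases x with
    | inl i => simp [hd, hθ, hdM]
    | inr j => simp [hd, hθ, hdM, hθhatM]
  have hGd : Gᵀ *ᵥ d = (βAᵀ + K) *ᵥ dM := by
    rw [hG, Matrix.transpose_fromRows, Matrix.transpose_zero, Matrix.transpose_transpose,
      hGM, hdsum, Matrix.fromCols_mulVec_sumElim, Matrix.zero_mulVec, zero_add]
  have hBd : B = (n : ℝ)⁻¹ • (Uhatᵀ *ᵥ ((Xᵀ * X) *ᵥ d)) - (βAᵀ + K) *ᵥ dM := by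
    rw [hB, Matrix.transpose_sub, Matrix.sub_mulVec, hGd, Matrix.transpose_mul,
      hSighatX, Matrix.transpose_smul, Matrix.transpose_mul, Matrix.transpose_transpose,
      Matrix.mul_smul, Matrix.smul_mulVec, Matrix.mulVec_mulVec]
  -- assemble
  rw [hγhat, hγ, hW, hBd, hβt, hW1, hres2]
  have e1 : (βAᵀ + K) *ᵥ θhatM = βAᵀ *ᵥ θhatM + K *ᵥ θhatM := Matrix.add_mulVec _ _ _
  have e2 : (βAᵀ + K) *ᵥ dM = (βAᵀ *ᵥ θM - βAᵀ *ᵥ θhatM) + (K *ᵥ θM - K *ᵥ θhatM) := by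
    simp only [hdM, Matrix.mulVec_sub, Matrix.add_mulVec]; abel
  have e3 : Uhatᵀ *ᵥ ((Xᵀ * X) *ᵥ d + Xᵀ *ᵥ Z)
      = Uhatᵀ *ᵥ ((Xᵀ * X) *ᵥ d) + Uhatᵀ *ᵥ (Xᵀ *ᵥ Z) := Matrix.mulVec_add _ _ _
  rw [e1, e2, e3, smul_add]
  abel
end

section
/- (Lemma on maximal norm concentration.) Let A₁,…,A_n be i.i.d. q-dimensional centered random vectors such that the (possibly dependent) coordinates of each A_i are subGaussian with a common parameter. If q ≲ n^{1/2}, then there is a constant c > 0 such that max_{1≤i≤n} |‖A_i‖₂ − σ_A√q| ≤ c n^{1/4} with probability at least 1 − e^{−c n^{1/2}/q + log(nq)}, where σ_A² = q⁻¹ Σ_{j=1}^q E[A_{ij}²]. -/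
open MeasureTheory ProbabilityTheory

/-- A real-valued random variable `f` is subGaussian with parameter `σ > 0` if
`P(|f − E f| ≥ t) ≤ 2 exp(−t²/(2σ²))` for all `t ≥ 0`. -/
def IsSubGaussianRV {Ω : Type*} [MeasurableSpace Ω] (μ : Measure Ω) (f : Ω → ℝ) (σ : ℝ) :
    Prop :=
  ∀ t : ℝ, 0 ≤ t →
    μ {ω | t ≤ |f ω - ∫ x, f x ∂μ|} ≤ ENNReal.ofReal (2 * Real.exp (-t ^ 2 / (2 * σ ^ 2)))

lemma moment2_le {Ω : Type*} [MeasurableSpace Ω] (μ : Measure Ω) [IsProbabilityMeasure μ]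
    (f : Ω → ℝ) (hf : Measurable f) (hmean : ∫ ω, f ω ∂μ = 0)
    (σp : ℝ) (hσ : 0 < σp) (hsg : IsSubGaussianRV μ f σp) :
    ∫ ω, f ω ^ 2 ∂μ ≤ 4 * σp ^ 2 := by
  have h1 : ∫ ω, f ω ^ 2 ∂μ = (∫⁻ ω, ENNReal.ofReal (f ω ^ 2) ∂μ).toReal :=
    integral_eq_lintegral_of_nonneg_ae (Filter.Eventually.of_forall fun ω => sq_nonneg _)
      (hf.pow_const 2).aestronglyMeasurable
  have h2 : ∫⁻ ω, ENNReal.ofReal (f ω ^ 2) ∂μ = ∫⁻ t in Set.Ioi 0, μ {ω | t ≤ f ω ^ 2} :=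
    lintegral_eq_lintegral_meas_le μ (Filter.Eventually.of_forall fun ω => sq_nonneg _)
      (hf.pow_const 2).aemeasurable
  set b : ℝ := 1 / (2 * σp ^ 2) with hb
  have hbpos : 0 < b := by positivity
  have h3 : ∀ t : ℝ, 0 < t → μ {ω | t ≤ f ω ^ 2} ≤ ENNReal.ofReal (2 * Real.exp (-b * t)) := by
    intro t ht
    have hsub : {ω | t ≤ f ω ^ 2} ⊆ {ω | Real.sqrt t ≤ |f ω - ∫ x, f x ∂μ|} := by
      intro ω hω
      simp only [Set.mem_setOf_eq, hmean, sub_zero]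
      calc Real.sqrt t ≤ Real.sqrt (f ω ^ 2) := Real.sqrt_le_sqrt hω
        _ = |f ω| := Real.sqrt_sq_eq_abs _
    calc μ {ω | t ≤ f ω ^ 2} ≤ μ {ω | Real.sqrt t ≤ |f ω - ∫ x, f x ∂μ|} := measure_mono hsub
      _ ≤ ENNReal.ofReal (2 * Real.exp (-(Real.sqrt t) ^ 2 / (2 * σp ^ 2))) :=
          hsg _ (Real.sqrt_nonneg t)
      _ = ENNReal.ofReal (2 * Real.exp (-b * t)) := by
          rw [Real.sq_sqrt ht.le]; congr 1; rw [hb]; ring_nf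
  have h4 : ∫⁻ t in Set.Ioi 0, μ {ω | t ≤ f ω ^ 2}
      ≤ ∫⁻ t in Set.Ioi 0, ENNReal.ofReal (2 * Real.exp (-b * t)) :=
    setLIntegral_mono' measurableSet_Ioi fun t ht => h3 t ht
  have hint : IntegrableOn (fun t => 2 * Real.exp (-b * t)) (Set.Ioi 0) :=
    (exp_neg_integrableOn_Ioi 0 hbpos).const_mul 2
  have h5 : ∫⁻ t in Set.Ioi 0, ENNReal.ofReal (2 * Real.exp (-b * t))
      = ENNReal.ofReal (∫ t in Set.Ioi 0, 2 * Real.exp (-b * t)) := by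
    rw [ofReal_integral_eq_lintegral_ofReal hint
      (Filter.Eventually.of_forall fun t => by positivity)]
  have h6 : ∫ t in Set.Ioi 0, 2 * Real.exp (-b * t) = 2 / b := by
    rw [MeasureTheory.integral_const_mul]
    have h : ∀ t : ℝ, Real.exp (-b * t) = Real.exp (-(b * t)) := fun t => by ring_nf
    simp_rw [h]
    have := integral_comp_mul_left_Ioi (fun x => Real.exp (-x)) 0 hbpos
    simp only [mul_zero] at this
    rw [this, integral_exp_neg_Ioi]
    simp [smul_eq_mul]
    ring
  have h7 : 2 / b = 4 * σp ^ 2 := by rw [hb]; field_simp; ring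
  rw [h1, h2]
  calc (∫⁻ t in Set.Ioi 0, μ {ω | t ≤ f ω ^ 2}).toReal
      ≤ (ENNReal.ofReal (4 * σp ^ 2)).toReal := by
        apply ENNReal.toReal_mono ENNReal.ofReal_ne_top
        rw [← h7, ← h6, ← h5]; exact h4
    _ = 4 * σp ^ 2 := ENNReal.toReal_ofReal (by positivity)

/-- maximal norm concentration, Lemma C.2.
Let `A₁,…,A_n` be i.i.d. `q`-dimensional centered random vectors whose (possibly dependent)
coordinates are subGaussian with a common parameter.  If `q ≲ √n`, then there is a constant
`c > 0` such that `max_{1≤i≤n} |‖A_i‖₂ − σ_A √q| ≤ c n^{1/4}` with probability at least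
`1 − e^{−c n^{1/2}/q + log(nq)}`, where `σ_A² = q⁻¹ Σ_j E[A_{ij}²]`. -/
theorem statement_12 :
    ∀ σp K : ℝ, 0 < σp → 0 < K →
    ∃ c : ℝ, 0 < c ∧
      ∀ (n q : ℕ), 0 < n → 0 < q → (q : ℝ) ≤ K * Real.sqrt n →
      ∀ (Ω : Type) (_ : MeasurableSpace Ω) (μ : Measure Ω), IsProbabilityMeasure μ →
      ∀ (A : Ω → Fin n → Fin q → ℝ),
        (∀ i j, Measurable fun ω => A ω i j) →
        -- the rows A₁,…,A_n are independent and identically distributed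
        iIndepFun (fun i ω => A ω i) μ →
        (∀ i i' : Fin n, IdentDistrib (fun ω => A ω i) (fun ω => A ω i') μ μ) →
        -- centered, with subGaussian coordinates with common parameter σp
        (∀ i j, ∫ ω, A ω i j ∂μ = 0) →
        (∀ i j, IsSubGaussianRV μ (fun ω => A ω i j) σp) →
      ∀ σA : ℝ, 0 ≤ σA → (∀ i, σA ^ 2 = (q : ℝ)⁻¹ * ∑ j, ∫ ω, (A ω i j) ^ 2 ∂μ) →
        (1 : ENNReal) - ENNReal.ofReal
            (Real.exp (-c * Real.sqrt n / q + Real.log (n * q)))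
          ≤ μ {ω | ∀ i, |Real.sqrt (∑ j, (A ω i j) ^ 2) - σA * Real.sqrt q|
                    ≤ c * (n : ℝ) ^ ((1 : ℝ) / 4)} := by
  intro σp K hσp hK
  refine ⟨max (4 * σp ^ 2) (max (2 * σp * Real.sqrt K) (K * Real.log 2 + 1)), ?_, ?_⟩
  · exact lt_of_lt_of_le (by positivity) (le_max_left _ _)
  set c : ℝ := max (4 * σp ^ 2) (max (2 * σp * Real.sqrt K) (K * Real.log 2 + 1)) with hcdef
  have hc1 : 4 * σp ^ 2 ≤ c := le_max_left _ _
  have hc2 : 2 * σp * Real.sqrt K ≤ c := le_max_of_le_right (le_max_left _ _)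
  have hc3 : K * Real.log 2 + 1 ≤ c := le_max_of_le_right (le_max_right _ _)
  have hcpos : 0 < c := lt_of_lt_of_le (by positivity) hc1
  intro n q hn hq hqK Ω mΩ μ hμ A hA hind hid hmean hsg σA hσA hσAsq
  -- notation
  set s : ℝ := Real.sqrt n with hs
  have hspos : 0 < s := Real.sqrt_pos.mpr (by exact_mod_cast hn)
  set n4 : ℝ := (n : ℝ) ^ ((1 : ℝ) / 4) with hn4
  have hn4pos : 0 < n4 := Real.rpow_pos_of_pos (by exact_mod_cast hn) _
  have hn4sq : n4 ^ 2 = s := by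
    rw [hn4, hs, ← Real.rpow_natCast ((n : ℝ) ^ ((1:ℝ)/4)) 2, ← Real.rpow_mul (by positivity),
      Real.sqrt_eq_rpow]
    norm_num
  have hqpos : (0 : ℝ) < q := by exact_mod_cast hq
  set t : ℝ := c * n4 with ht
  have htpos : 0 < t := by positivity
  set τ : ℝ := t / Real.sqrt q with hτ
  have hτpos : 0 < τ := by positivity
  have hτsq : τ ^ 2 = c ^ 2 * s / q := by
    rw [hτ, div_pow, Real.sq_sqrt hqpos.le, ht, mul_pow, hn4sq]
  -- bound on σA
  have hσA2 : σA ≤ 2 * σp := by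
    have hi : σA ^ 2 ≤ 4 * σp ^ 2 := by
      rw [hσAsq ⟨0, hn⟩]
      have hterm : ∀ j : Fin q, ∫ ω, (A ω ⟨0, hn⟩ j) ^ 2 ∂μ ≤ 4 * σp ^ 2 := fun j =>
        moment2_le μ _ (hA _ j) (hmean _ j) σp hσp (hsg _ j)
      calc (q : ℝ)⁻¹ * ∑ j, ∫ ω, (A ω ⟨0, hn⟩ j) ^ 2 ∂μ
          ≤ (q : ℝ)⁻¹ * ∑ _j : Fin q, (4 * σp ^ 2) :=
            mul_le_mul_of_nonneg_left (Finset.sum_le_sum fun j _ => hterm j) (by positivity)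
        _ = 4 * σp ^ 2 := by
            rw [Finset.sum_const, Finset.card_univ, Fintype.card_fin, nsmul_eq_mul]
            field_simp
    nlinarith [sq_nonneg (σA - 2 * σp), sq_nonneg (σA + 2 * σp)]
  have ha : σA * Real.sqrt q ≤ t := by
    have h1 : Real.sqrt q ≤ Real.sqrt K * n4 := by
      have hss : Real.sqrt s = n4 := by
        rw [hs, hn4, Real.sqrt_eq_rpow (Real.sqrt n), Real.sqrt_eq_rpow (n : ℝ),
          ← Real.rpow_mul (Nat.cast_nonneg n)]
        norm_num
      have h2 : Real.sqrt (K * s) = Real.sqrt K * n4 := by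
        rw [Real.sqrt_mul hK.le, hss]
      calc Real.sqrt q ≤ Real.sqrt (K * s) := Real.sqrt_le_sqrt hqK
        _ = Real.sqrt K * n4 := h2
    calc σA * Real.sqrt q ≤ (2 * σp) * (Real.sqrt K * n4) := by
          apply mul_le_mul hσA2 h1 (Real.sqrt_nonneg _) (by positivity)
      _ = (2 * σp * Real.sqrt K) * n4 := by ring
      _ ≤ c * n4 := by gcongr
      _ = t := ht.symm
  -- the good event
  set S : Set Ω := {ω | ∀ i, |Real.sqrt (∑ j, (A ω i j) ^ 2) - σA * Real.sqrt q| ≤ t} with hS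
  have hSmeas : MeasurableSet S := by
    have : S = ⋂ i, {ω | |Real.sqrt (∑ j, (A ω i j) ^ 2) - σA * Real.sqrt q| ≤ t} := by
      ext ω; simp [hS, Set.mem_iInter]
    rw [this]
    refine MeasurableSet.iInter fun i => ?_
    have hm : Measurable fun ω => |Real.sqrt (∑ j, (A ω i j) ^ 2) - σA * Real.sqrt q| := by
      apply Measurable.abs
      apply Measurable.sub_const
      apply Measurable.sqrt
      exact Finset.measurable_sum _ fun j _ => (hA i j).pow_const 2
    exact hm measurableSet_Iic
  -- complement is covered by coordinate tails
  have hsub : Sᶜ ⊆ ⋃ i, ⋃ j, {ω | τ ≤ |A ω i j|} := by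
    intro ω hω
    simp only [hS, Set.mem_compl_iff, Set.mem_setOf_eq, not_forall, not_le] at hω
    obtain ⟨i, hi⟩ := hω
    set X : ℝ := ∑ j, (A ω i j) ^ 2 with hX
    have hX0 : 0 ≤ X := Finset.sum_nonneg fun j _ => sq_nonneg _
    have hXt : t ^ 2 < X := by
      rcases lt_abs.mp hi with h | h
      · have h' : t < Real.sqrt X := by
          have := Real.sqrt_nonneg X
          nlinarith [Real.sqrt_nonneg q, mul_nonneg hσA (Real.sqrt_nonneg (q : ℝ))]
        calc t ^ 2 = t * t := sq t
          _ < Real.sqrt X * Real.sqrt X := mul_self_lt_mul_self htpos.le h'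
          _ = X := Real.mul_self_sqrt hX0
      · exfalso
        have := Real.sqrt_nonneg X
        linarith
    by_contra hcon
    simp only [Set.mem_iUnion, Set.mem_setOf_eq, not_exists, not_le] at hcon
    have hXlt : X < t ^ 2 := by
      have hbound : ∀ j : Fin q, (A ω i j) ^ 2 < τ ^ 2 := by
        intro j
        have h1 : |A ω i j| < τ := hcon i j
        calc (A ω i j) ^ 2 = |A ω i j| ^ 2 := (sq_abs _).symm
          _ < τ ^ 2 := by
            apply pow_lt_pow_left₀ h1 (abs_nonneg _) two_ne_zero
      have hne : (Finset.univ : Finset (Fin q)).Nonempty := ⟨⟨0, hq⟩, Finset.mem_univ _⟩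
      calc X < ∑ _j : Fin q, τ ^ 2 :=
            Finset.sum_lt_sum_of_nonempty hne fun j _ => hbound j
        _ = q * τ ^ 2 := by
            rw [Finset.sum_const, Finset.card_univ, Fintype.card_fin, nsmul_eq_mul]
        _ = q * (t ^ 2 / q) := by
            have hτt : τ ^ 2 = t ^ 2 / q := by rw [hτ, div_pow, Real.sq_sqrt hqpos.le]
            rw [hτt]
        _ = t ^ 2 := by field_simp
    linarith
  -- tail bound for each coordinate
  have htail : ∀ i j, μ {ω | τ ≤ |A ω i j|}
      ≤ ENNReal.ofReal (2 * Real.exp (-τ ^ 2 / (2 * σp ^ 2))) := by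
    intro i j
    have := hsg i j τ hτpos.le
    simpa [hmean i j] using this
  -- union bound
  have hcompl : μ Sᶜ ≤ (n * q : ℕ) * ENNReal.ofReal (2 * Real.exp (-τ ^ 2 / (2 * σp ^ 2))) := by
    calc μ Sᶜ ≤ μ (⋃ i, ⋃ j, {ω | τ ≤ |A ω i j|}) := measure_mono hsub
      _ ≤ ∑ i : Fin n, μ (⋃ j, {ω | τ ≤ |A ω i j|}) := measure_iUnion_fintype_le _ _
      _ ≤ ∑ i : Fin n, ∑ j : Fin q, μ {ω | τ ≤ |A ω i j|} :=
          Finset.sum_le_sum fun i _ => measure_iUnion_fintype_le _ _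
      _ ≤ ∑ _i : Fin n, ∑ _j : Fin q,
            ENNReal.ofReal (2 * Real.exp (-τ ^ 2 / (2 * σp ^ 2))) :=
          Finset.sum_le_sum fun i _ => Finset.sum_le_sum fun j _ => htail i j
      _ = (n * q : ℕ) * ENNReal.ofReal (2 * Real.exp (-τ ^ 2 / (2 * σp ^ 2))) := by
          simp [Finset.sum_const, mul_assoc, Nat.cast_mul]
  -- compare with the target exponential
  have hnq1 : (1 : ℝ) ≤ (n : ℝ) * q := by
    have : (1 : ℕ) ≤ n * q := Nat.one_le_iff_ne_zero.mpr (by positivity)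
    exact_mod_cast this
  have hkey : ((n * q : ℕ) : ENNReal) * ENNReal.ofReal (2 * Real.exp (-τ ^ 2 / (2 * σp ^ 2)))
      ≤ ENNReal.ofReal (Real.exp (-c * s / q + Real.log (n * q))) := by
    rw [← ENNReal.ofReal_natCast (n * q), ← ENNReal.ofReal_mul (Nat.cast_nonneg _)]
    apply ENNReal.ofReal_le_ofReal
    push_cast
    have hexp : Real.exp (-c * s / q + Real.log ((n : ℝ) * q))
        = ((n : ℝ) * q) * Real.exp (-c * s / q) := by
      rw [Real.exp_add, Real.exp_log (by linarith)]; ring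
    rw [hexp]
    have hmain : 2 * Real.exp (-τ ^ 2 / (2 * σp ^ 2)) ≤ Real.exp (-c * s / q) := by
      rw [show 2 * Real.exp (-τ ^ 2 / (2 * σp ^ 2))
          = Real.exp (Real.log 2 + -τ ^ 2 / (2 * σp ^ 2)) by
        rw [Real.exp_add, Real.exp_log two_pos]]
      apply Real.exp_le_exp.mpr
      rw [hτsq]
      -- need: log 2 + -(c²s/q)/(2σp²) ≤ -c s / q
      have hr : 1 / K ≤ s / q := by
        rw [div_le_div_iff₀ hK hqpos]
        calc 1 * q = (q : ℝ) := one_mul _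
          _ ≤ K * s := hqK
          _ = s * K := mul_comm _ _
      have hlog2 : 0 < Real.log 2 := Real.log_pos (by norm_num)
      have hcoef : K * Real.log 2 ≤ c ^ 2 / (2 * σp ^ 2) - c := by
        have h1 : 4 * σp ^ 2 * c ≤ c * c :=
          mul_le_mul_of_nonneg_right hc1 hcpos.le
        have h2 : 2 * c ≤ c ^ 2 / (2 * σp ^ 2) := by
          rw [le_div_iff₀ (by positivity)]
          have hrr : 2 * c * (2 * σp ^ 2) = 4 * σp ^ 2 * c := by ring
          have hcc : c ^ 2 = c * c := sq c
          linarith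
        linarith
      have hcoef0 : 0 ≤ c ^ 2 / (2 * σp ^ 2) - c := by
        have hkl : 0 ≤ K * Real.log 2 := mul_nonneg hK.le hlog2.le
        linarith
      have hfin : Real.log 2 ≤ (c ^ 2 / (2 * σp ^ 2) - c) * (s / q) := by
        calc Real.log 2 = (K * Real.log 2) * (1 / K) := by field_simp
          _ ≤ (c ^ 2 / (2 * σp ^ 2) - c) * (s / q) := by
              apply mul_le_mul hcoef hr (by positivity) hcoef0
      have hid2 : (c ^ 2 / (2 * σp ^ 2) - c) * (s / (q : ℝ))
          + (-(c ^ 2 * s / (q : ℝ)) / (2 * σp ^ 2)) - (-c * s / (q : ℝ)) = 0 := by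
        field_simp
        ring
      linarith
    exact mul_le_mul_of_nonneg_left hmain (by positivity)
  have hcompl2 : μ Sᶜ ≤ ENNReal.ofReal (Real.exp (-c * s / q + Real.log (n * q))) :=
    le_trans hcompl hkey
  -- conclude
  have hcomp : μ Sᶜ = 1 - μ S := by
    rw [← prob_compl_eq_one_sub hSmeas]
  have hSle : μ S ≤ 1 := prob_le_one
  calc (1 : ENNReal) - ENNReal.ofReal (Real.exp (-c * s / q + Real.log (n * q)))
      ≤ 1 - μ Sᶜ := tsub_le_tsub_left hcompl2 1
    _ = 1 - (1 - μ S) := by rw [hcomp]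
    _ = μ S := ENNReal.sub_sub_cancel ENNReal.one_ne_top hSle
end
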